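/- Let $b,c$ be positive integers, $a_1,a_2$ integers with $b \nmid a_1$, $b \nmid a_2$, $b \mid a_1+a_2$ but $bc \nmid a_1+a_2$. Then, with $\xi = e^{2\pi i/(bc)}$, $\sum_{k=0}^{c-1} \frac{1}{(1-\xi^{a_1+kb})(1-\xi^{a_2-kb})} = 0$. -/

import Mathlib

open Complex Finset in
lemma aux_geom_sum (c : ℕ) (hc : 0 < c) (ω z : ℂ) (hω : IsPrimitiveRoot ω c)
    (hz : z ^ c ≠ 1) :
    ∑ k ∈ Finset.range c, (1 - z * ω ^ k)⁻¹ = c * (1 - z ^ c)⁻¹ := by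
  have hzc : 1 - z ^ c ≠ 0 := sub_ne_zero.mpr (Ne.symm hz)
  have hpow : ∀ k : ℕ, (z * ω ^ k) ^ c = z ^ c := by
    intro k
    rw [mul_pow, ← pow_mul, mul_comm k c, pow_mul, hω.pow_eq_one, one_pow, mul_one]
  have hne : ∀ k : ℕ, 1 - z * ω ^ k ≠ 0 := by
    intro k h
    apply hz
    have h' : z * ω ^ k = 1 := (sub_eq_zero.mp h).symm
    rw [← hpow k, h', one_pow]
  have hterm : ∀ k : ℕ, (1 - z * ω ^ k)⁻¹
      = (1 - z ^ c)⁻¹ * ∑ j ∈ Finset.range c, (z * ω ^ k) ^ j := by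
    intro k
    have hgs := geom_sum_mul (z * ω ^ k) c
    rw [hpow k] at hgs
    refine inv_eq_of_mul_eq_one_right ?_
    rw [mul_comm ((1 - z ^ c)⁻¹) _, ← mul_assoc]
    have : (1 - z * ω ^ k) * ∑ j ∈ Finset.range c, (z * ω ^ k) ^ j = 1 - z ^ c := by
      linear_combination -hgs
    rw [this, mul_inv_cancel₀ hzc]
  calc ∑ k ∈ Finset.range c, (1 - z * ω ^ k)⁻¹
      = (1 - z ^ c)⁻¹ * ∑ k ∈ Finset.range c, ∑ j ∈ Finset.range c, (z * ω ^ k) ^ j := by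
        rw [Finset.mul_sum]; exact Finset.sum_congr rfl fun k _ => hterm k
    _ = (1 - z ^ c)⁻¹ * ∑ j ∈ Finset.range c, z ^ j * ∑ k ∈ Finset.range c, (ω ^ j) ^ k := by
        rw [Finset.sum_comm]
        congr 1
        refine Finset.sum_congr rfl fun j _ => ?_
        rw [Finset.mul_sum]
        refine Finset.sum_congr rfl fun k _ => ?_
        rw [mul_pow, ← pow_mul, ← pow_mul, mul_comm k j]
    _ = (1 - z ^ c)⁻¹ * (c : ℂ) := by
        congr 1
        rw [Finset.sum_eq_single 0]
        · simp
        · intro j hj hj0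
          have hωj : ω ^ j ≠ 1 :=
            hω.pow_ne_one_of_pos_of_lt hj0 (Finset.mem_range.mp hj)
          rw [geom_sum_eq hωj, ← pow_mul, mul_comm j c, pow_mul, hω.pow_eq_one, one_pow]
          simp
        · intro h; exact absurd (Finset.mem_range.mpr hc) h
    _ = c * (1 - z ^ c)⁻¹ := mul_comm _ _

lemma aux_term (x y ζ : ℂ) (hxy : x * y = ζ) (hx : x ≠ 1) (hy : y ≠ 1) (hζ : ζ ≠ 1) :
    ((1 - x) * (1 - y))⁻¹ = (1 - ζ)⁻¹ * ((1 - x)⁻¹ + (1 - y)⁻¹ - 1) := by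
  subst hxy
  have hx' : 1 - x ≠ 0 := sub_ne_zero.mpr (Ne.symm hx)
  have hy' : 1 - y ≠ 0 := sub_ne_zero.mpr (Ne.symm hy)
  have hζ' : 1 - x * y ≠ 0 := sub_ne_zero.mpr (Ne.symm hζ)
  field_simp
  ring

open Complex in
theorem stmt_3 (b c : ℕ) (hb : 0 < b) (hc : 0 < c) (a₁ a₂ : ℤ)
    (h1 : ¬ ((b : ℤ) ∣ a₁)) (h2 : ¬ ((b : ℤ) ∣ a₂))
    (h3 : (b : ℤ) ∣ a₁ + a₂) (h4 : ¬ (((b : ℤ) * c) ∣ a₁ + a₂)) :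
    ∑ k ∈ Finset.range c,
        ((1 - Complex.exp (2 * Real.pi * Complex.I / ((b : ℂ) * c)) ^ (a₁ + (k : ℤ) * b)) *
         (1 - Complex.exp (2 * Real.pi * Complex.I / ((b : ℂ) * c)) ^ (a₂ - (k : ℤ) * b)))⁻¹
      = 0 := by
  set ξ : ℂ := Complex.exp (2 * Real.pi * Complex.I / ((b : ℂ) * c)) with hξdef
  have hbc : b * c ≠ 0 := by positivity
  have hξ : IsPrimitiveRoot ξ (b * c) := by
    have := Complex.isPrimitiveRoot_exp (b * c) hbc
    rwa [Nat.cast_mul] at this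
  have hξ0 : ξ ≠ 0 := Complex.exp_ne_zero _
  have hone : ∀ m : ℤ, ξ ^ m = 1 ↔ ((b : ℤ) * c) ∣ m := by
    intro m
    rw [hξ.zpow_eq_one_iff_dvd m]
    push_cast
    rfl
  -- the two primitive c-th roots of unity
  set ω : ℂ := ξ ^ b with hωdef
  have hω : IsPrimitiveRoot ω c := hξ.pow (Nat.pos_of_ne_zero hbc) rfl
  have hωinv : IsPrimitiveRoot ω⁻¹ c := hω.inv
  -- nonvanishing facts
  have hdvd_b : ∀ m : ℤ, ((b : ℤ) * c) ∣ m → (b : ℤ) ∣ m := fun m h =>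
    dvd_trans (Dvd.intro c rfl) h
  have hx1 : ∀ k : ℕ, ξ ^ (a₁ + (k : ℤ) * b) ≠ 1 := by
    intro k h
    rw [hone] at h
    obtain ⟨d, hd⟩ := hdvd_b _ h
    exact h1 ⟨d - k, by linear_combination hd⟩
  have hx2 : ∀ k : ℕ, ξ ^ (a₂ - (k : ℤ) * b) ≠ 1 := by
    intro k h
    rw [hone] at h
    obtain ⟨d, hd⟩ := hdvd_b _ h
    exact h2 ⟨d + k, by linear_combination hd⟩
  have hζne : ξ ^ (a₁ + a₂) ≠ 1 := by
    intro h; rw [hone] at h; exact h4 h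
  -- rewrite exponents
  have hz1 : ∀ k : ℕ, ξ ^ (a₁ + (k : ℤ) * b) = ξ ^ a₁ * ω ^ k := by
    intro k
    rw [zpow_add₀ hξ0, mul_comm ((k : ℤ)) ((b : ℤ)), zpow_mul, zpow_natCast, zpow_natCast]
  have hz2 : ∀ k : ℕ, ξ ^ (a₂ - (k : ℤ) * b) = ξ ^ a₂ * (ω⁻¹) ^ k := by
    intro k
    rw [sub_eq_add_neg, zpow_add₀ hξ0, zpow_neg, mul_comm ((k : ℤ)) ((b : ℤ)), zpow_mul,
      zpow_natCast, zpow_natCast, inv_pow]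
  -- z^c values
  have hzc1 : (ξ ^ a₁) ^ c = ξ ^ (a₁ * c) := by
    rw [← zpow_natCast (ξ ^ a₁), ← zpow_mul]
  have hzc2 : (ξ ^ a₂) ^ c = ξ ^ (a₂ * c) := by
    rw [← zpow_natCast (ξ ^ a₂), ← zpow_mul]
  have hcancel : ∀ m : ℤ, ((b : ℤ) * c) ∣ m * c → (b : ℤ) ∣ m := by
    rintro m ⟨d, hd⟩
    refine ⟨d, ?_⟩
    have hc0 : (c : ℤ) ≠ 0 := Int.natCast_ne_zero.mpr hc.ne'
    have : m * c = b * d * c := by linarith [hd]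
    exact mul_right_cancel₀ hc0 this
  have hw1 : ξ ^ (a₁ * c) ≠ 1 := by
    intro h; rw [hone] at h; exact h1 (hcancel _ h)
  have hw2 : ξ ^ (a₂ * c) ≠ 1 := by
    intro h; rw [hone] at h; exact h2 (hcancel _ h)
  have hS1 : ∑ k ∈ Finset.range c, (1 - ξ ^ (a₁ + (k : ℤ) * b))⁻¹
      = c * (1 - ξ ^ (a₁ * c))⁻¹ := by
    rw [← hzc1]
    rw [show (∑ k ∈ Finset.range c, (1 - ξ ^ (a₁ + (k : ℤ) * b))⁻¹)
        = ∑ k ∈ Finset.range c, (1 - ξ ^ a₁ * ω ^ k)⁻¹ from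
      Finset.sum_congr rfl fun k _ => by rw [hz1 k]]
    exact aux_geom_sum c hc ω _ hω (by rw [hzc1]; exact hw1)
  have hS2 : ∑ k ∈ Finset.range c, (1 - ξ ^ (a₂ - (k : ℤ) * b))⁻¹
      = c * (1 - ξ ^ (a₂ * c))⁻¹ := by
    rw [← hzc2]
    rw [show (∑ k ∈ Finset.range c, (1 - ξ ^ (a₂ - (k : ℤ) * b))⁻¹)
        = ∑ k ∈ Finset.range c, (1 - ξ ^ a₂ * (ω⁻¹) ^ k)⁻¹ from
      Finset.sum_congr rfl fun k _ => by rw [hz2 k]]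
    exact aux_geom_sum c hc ω⁻¹ _ hωinv (by rw [hzc2]; exact hw2)
  -- apply the term identity
  have hmain : ∑ k ∈ Finset.range c,
        ((1 - ξ ^ (a₁ + (k : ℤ) * b)) * (1 - ξ ^ (a₂ - (k : ℤ) * b)))⁻¹
      = (1 - ξ ^ (a₁ + a₂))⁻¹ *
        ((∑ k ∈ Finset.range c, (1 - ξ ^ (a₁ + (k : ℤ) * b))⁻¹)
          + (∑ k ∈ Finset.range c, (1 - ξ ^ (a₂ - (k : ℤ) * b))⁻¹) - c) := by
    rw [show (∑ k ∈ Finset.range c,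
          ((1 - ξ ^ (a₁ + (k : ℤ) * b)) * (1 - ξ ^ (a₂ - (k : ℤ) * b)))⁻¹)
        = ∑ k ∈ Finset.range c, (1 - ξ ^ (a₁ + a₂))⁻¹ *
            ((1 - ξ ^ (a₁ + (k : ℤ) * b))⁻¹ + (1 - ξ ^ (a₂ - (k : ℤ) * b))⁻¹ - 1) from
      Finset.sum_congr rfl fun k _ => aux_term _ _ _
        (by rw [← zpow_add₀ hξ0]; ring_nf) (hx1 k) (hx2 k) hζne]
    rw [← Finset.mul_sum, Finset.sum_sub_distrib, Finset.sum_add_distrib, Finset.sum_const,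
      Finset.card_range, nsmul_eq_mul, mul_one]
  rw [hmain, hS1, hS2]
  -- final computation
  have hw12 : ξ ^ (a₁ * c) * ξ ^ (a₂ * c) = 1 := by
    rw [← zpow_add₀ hξ0, hone]
    obtain ⟨d, hd⟩ := h3
    exact ⟨d, by rw [← add_mul, hd]; ring⟩
  have hw10 : ξ ^ (a₁ * c) ≠ 0 := zpow_ne_zero _ hξ0
  have h1w1 : 1 - ξ ^ (a₁ * c) ≠ 0 := sub_ne_zero.mpr (Ne.symm hw1)
  have h1w2 : 1 - ξ ^ (a₂ * c) ≠ 0 := sub_ne_zero.mpr (Ne.symm hw2)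
  have hsum1 : (1 - ξ ^ (a₁ * c))⁻¹ + (1 - ξ ^ (a₂ * c))⁻¹ = 1 := by
    field_simp
    linear_combination -hw12
  rw [mul_eq_zero]
  right
  rw [show (c : ℂ) * (1 - ξ ^ (a₁ * c))⁻¹ + (c : ℂ) * (1 - ξ ^ (a₂ * c))⁻¹ - (c : ℂ)
      = (c : ℂ) * ((1 - ξ ^ (a₁ * c))⁻¹ + (1 - ξ ^ (a₂ * c))⁻¹ - 1) by ring, hsum1]
  simp
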